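/- For every finite simple graph G on vertex set [n] with degree sequence d_1,...,d_n, and all nonnegative reals λ_1,...,λ_n, the multivariate independence polynomial satisfies Z_G(λ_1,...,λ_n) ≥ ∏_{i=1}^n (1 + (d_i+1)λ_i)^{1/(d_i+1)}. -/

import Mathlib

open Finset Real

noncomputable def ff (d : ℕ) (x : ℝ) : ℝ := (1 + ((d:ℝ)+1)*x) ^ ((1:ℝ)/((d:ℝ)+1))

lemma ff_base_pos (d : ℕ) {x : ℝ} (hx : 0 ≤ x) : (0:ℝ) < 1 + ((d:ℝ)+1)*x := by
  have : (0:ℝ) ≤ ((d:ℝ)+1)*x := mul_nonneg (by positivity) hx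
  linarith

lemma ff_one_le (d : ℕ) {x : ℝ} (hx : 0 ≤ x) : (1:ℝ) ≤ ff d x := by
  have h1 : (1:ℝ) ≤ 1 + ((d:ℝ)+1)*x := by
    nlinarith [mul_nonneg (show (0:ℝ) ≤ (d:ℝ)+1 by positivity) hx]
  calc (1:ℝ) = 1 ^ ((1:ℝ)/((d:ℝ)+1)) := (Real.one_rpow _).symm
    _ ≤ ff d x := Real.rpow_le_rpow zero_le_one h1 (by positivity)

lemma ff_pow (d : ℕ) {x : ℝ} (hx : 0 ≤ x) : (ff d x) ^ (d+1) = 1 + ((d:ℝ)+1)*x := by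
  rw [ff, ← Real.rpow_natCast ((1 + ((d:ℝ)+1)*x) ^ ((1:ℝ)/((d:ℝ)+1))) (d+1),
    ← Real.rpow_mul (ff_base_pos d hx).le]
  rw [show (1:ℝ)/((d:ℝ)+1) * ((d+1:ℕ):ℝ) = 1 by push_cast; field_simp]
  exact Real.rpow_one _

/-- antitone in degree -/
lemma ff_anti (d e : ℕ) (hde : d ≤ e) {x : ℝ} (hx : 0 ≤ x) : ff e x ≤ ff d x := by
  have hdeR : (d:ℝ) ≤ (e:ℝ) := by exact_mod_cast hde
  have he1 : (0:ℝ) < (e:ℝ)+1 := by positivity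
  have hd1 : (0:ℝ) < (d:ℝ)+1 := by positivity
  have hP : (0:ℝ) < 1+((e:ℝ)+1)*x := ff_base_pos e hx
  have hw1 : (0:ℝ) ≤ ((d:ℝ)+1)/((e:ℝ)+1) := by positivity
  have hw2 : (0:ℝ) ≤ ((e:ℝ)-(d:ℝ))/((e:ℝ)+1) := div_nonneg (by linarith) he1.le
  have hsum : ((d:ℝ)+1)/((e:ℝ)+1) + ((e:ℝ)-(d:ℝ))/((e:ℝ)+1) = 1 := by field_simp; ring
  have h := Real.geom_mean_le_arith_mean2_weighted hw1 hw2 hP.le zero_le_one hsum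
  simp only [Real.one_rpow, mul_one] at h
  have h2 : (1+((e:ℝ)+1)*x) ^ (((d:ℝ)+1)/((e:ℝ)+1)) ≤ 1+((d:ℝ)+1)*x := by
    calc (1+((e:ℝ)+1)*x) ^ (((d:ℝ)+1)/((e:ℝ)+1))
        ≤ ((d:ℝ)+1)/((e:ℝ)+1) * (1+((e:ℝ)+1)*x) + ((e:ℝ)-(d:ℝ))/((e:ℝ)+1) := h
      _ = 1+((d:ℝ)+1)*x := by field_simp; ring
  have key : ff e x = ((1+((e:ℝ)+1)*x) ^ (((d:ℝ)+1)/((e:ℝ)+1))) ^ ((1:ℝ)/((d:ℝ)+1)) := by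
    rw [ff, ← Real.rpow_mul hP.le]
    congr 1
    field_simp
  rw [key, ff]
  exact Real.rpow_le_rpow (Real.rpow_nonneg hP.le _) h2 (by positivity)

/-- superadditivity of geometric mean (Minkowski-type) -/
lemma minkowskiGM {V : Type*} (s : Finset V) (hs : s.Nonempty) (z : V → ℝ)
    (hz : ∀ u ∈ s, 1 ≤ z u) :
    (s.card : ℝ) * (∏ u ∈ s, z u) ^ ((1:ℝ)/(s.card:ℝ)) + 1
      ≤ (∏ u ∈ s, ((s.card:ℝ) * z u + 1) ^ ((1:ℝ)/(s.card:ℝ))) := by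
  set d : ℕ := s.card with hd
  have hd1 : 1 ≤ d := Finset.card_pos.mpr hs
  have hdR : (0:ℝ) < (d:ℝ) := by exact_mod_cast hd1
  set w : ℝ := 1/(d:ℝ) with hwdef
  have hw : (0:ℝ) ≤ w := by positivity
  have hwsum : ∑ _u ∈ s, w = 1 := by
    rw [Finset.sum_const, ← hd, nsmul_eq_mul, hwdef]
    field_simp
  have hT : ∀ u ∈ s, (0:ℝ) < (d:ℝ)*z u + 1 := fun u hu => by nlinarith [hz u hu]
  have hzpos : ∀ u ∈ s, (0:ℝ) < z u := fun u hu => lt_of_lt_of_le one_pos (hz u hu)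
  have h1 := Real.geom_mean_le_arith_mean_weighted s (fun _ => w)
    (fun u => (d:ℝ)*z u/((d:ℝ)*z u+1)) (fun _ _ => hw) hwsum
    (fun u hu => div_nonneg (mul_nonneg (Nat.cast_nonneg d) (hzpos u hu).le) (hT u hu).le)
  have h2 := Real.geom_mean_le_arith_mean_weighted s (fun _ => w)
    (fun u => 1/((d:ℝ)*z u+1)) (fun _ _ => hw) hwsum
    (fun u hu => div_nonneg zero_le_one (hT u hu).le)
  have hsumeq : (∑ u ∈ s, w * ((d:ℝ)*z u/((d:ℝ)*z u+1))) + (∑ u ∈ s, w * (1/((d:ℝ)*z u+1))) = 1 := by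
    rw [← Finset.sum_add_distrib]
    have hcg : ∑ u ∈ s, (w * ((d:ℝ)*z u/((d:ℝ)*z u+1)) + w * (1/((d:ℝ)*z u+1))) = ∑ _u ∈ s, w := by
      refine Finset.sum_congr rfl (fun u hu => ?_)
      have hone : (d:ℝ)*z u/((d:ℝ)*z u+1) + 1/((d:ℝ)*z u+1) = 1 := by
        rw [← add_div, div_self (hT u hu).ne']
      calc w * ((d:ℝ)*z u/((d:ℝ)*z u+1)) + w * (1/((d:ℝ)*z u+1))
          = w * ((d:ℝ)*z u/((d:ℝ)*z u+1) + 1/((d:ℝ)*z u+1)) := by ring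
        _ = w := by rw [hone, mul_one]
    rw [hcg, hwsum]
  have key : (∏ u ∈ s, ((d:ℝ)*z u/((d:ℝ)*z u+1)) ^ w) + (∏ u ∈ s, (1/((d:ℝ)*z u+1)) ^ w) ≤ 1 := by
    linarith
  have hPpos : (0:ℝ) < ∏ u ∈ s, ((d:ℝ)*z u+1) ^ w :=
    Finset.prod_pos (fun u hu => Real.rpow_pos_of_pos (hT u hu) w)
  have e1 : ∏ u ∈ s, ((d:ℝ)*z u/((d:ℝ)*z u+1)) ^ w
      = ((d:ℝ) * (∏ u ∈ s, z u) ^ w) / ∏ u ∈ s, ((d:ℝ)*z u+1) ^ w := by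
    have hc : ∀ u ∈ s, ((d:ℝ)*z u/((d:ℝ)*z u+1)) ^ w = ((d:ℝ)*z u) ^ w / ((d:ℝ)*z u+1) ^ w :=
      fun u hu => Real.div_rpow (mul_nonneg (Nat.cast_nonneg d) (hzpos u hu).le) (hT u hu).le w
    rw [Finset.prod_congr rfl hc, Finset.prod_div_distrib]
    congr 1
    rw [Real.finset_prod_rpow s _ (fun u hu => mul_nonneg (Nat.cast_nonneg d) (hzpos u hu).le) w,
      Finset.prod_mul_distrib, Finset.prod_const, ← hd]
    rw [Real.mul_rpow (by positivity) (Finset.prod_nonneg (fun u hu => (hzpos u hu).le)),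
      ← Real.rpow_natCast (d:ℝ) d, ← Real.rpow_mul hdR.le]
    rw [show ((d:ℕ):ℝ) * w = 1 by rw [hwdef]; field_simp]
    rw [Real.rpow_one]
  have e2 : ∏ u ∈ s, (1/((d:ℝ)*z u+1)) ^ w = 1 / ∏ u ∈ s, ((d:ℝ)*z u+1) ^ w := by
    have hc : ∀ u ∈ s, (1/((d:ℝ)*z u+1)) ^ w = 1 ^ w / ((d:ℝ)*z u+1) ^ w :=
      fun u hu => Real.div_rpow zero_le_one (hT u hu).le w
    rw [Finset.prod_congr rfl hc, Finset.prod_div_distrib]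
    simp
  rw [e1, e2, ← add_div, div_le_one hPpos] at key
  exact key


lemma keyAMGM (k d : ℕ) (hkd : k ≤ d) {y : ℝ} (hy : 1 ≤ y) :
    ((d:ℝ)+1) * y^(d-k) ≤ ((d:ℝ)-(k:ℝ)) * y^(d+1) + ((k:ℝ)+1) := by
  have hy0 : (0:ℝ) ≤ y := by linarith
  have hk : (k:ℝ) ≤ (d:ℝ) := by exact_mod_cast hkd
  have hd1 : (0:ℝ) < (d:ℝ)+1 := by positivity
  have hw1 : (0:ℝ) ≤ ((d:ℝ)-(k:ℝ))/((d:ℝ)+1) := div_nonneg (by linarith) hd1.le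
  have hw2 : (0:ℝ) ≤ ((k:ℝ)+1)/((d:ℝ)+1) := by positivity
  have hsum : ((d:ℝ)-(k:ℝ))/((d:ℝ)+1) + ((k:ℝ)+1)/((d:ℝ)+1) = 1 := by
    field_simp
    ring
  have hp1 : (0:ℝ) ≤ y^(d+1) := by positivity
  have h := Real.geom_mean_le_arith_mean2_weighted hw1 hw2 hp1 zero_le_one hsum
  simp only [Real.one_rpow, mul_one] at h
  have hpow : (y^(d+1)) ^ (((d:ℝ)-(k:ℝ))/((d:ℝ)+1)) = y ^ (d-k) := by
    rw [← Real.rpow_natCast y (d+1), ← Real.rpow_mul hy0, ← Real.rpow_natCast y (d-k)]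
    congr 1
    rw [Nat.cast_sub hkd]
    push_cast
    field_simp
  rw [hpow] at h
  calc ((d:ℝ)+1) * y^(d-k)
      ≤ ((d:ℝ)+1) * (((d:ℝ)-(k:ℝ))/((d:ℝ)+1) * y^(d+1) + ((k:ℝ)+1)/((d:ℝ)+1)) :=
        mul_le_mul_of_nonneg_left h hd1.le
    _ = ((d:ℝ)-(k:ℝ)) * y^(d+1) + ((k:ℝ)+1) := by field_simp

lemma crossIneq (k d : ℕ) (hkd : k ≤ d) {y : ℝ} (hy : 1 ≤ y) :
    ((d:ℝ)+1) * y^d * ((k:ℝ)*y^(k+1)+1) ≤ ((k:ℝ)+1) * y^k * ((d:ℝ)*y^(d+1)+1) := by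
  have hy0 : (0:ℝ) ≤ y := by linarith
  have key := keyAMGM k d hkd hy
  have h2 : ((d:ℝ)+1) * y^d ≤ ((d:ℝ)-(k:ℝ)) * y^(d+k+1) + ((k:ℝ)+1)*y^k := by
    have := mul_le_mul_of_nonneg_right key (pow_nonneg hy0 k)
    have e0 : y^(d-k) * y^k = y^d := by
      rw [← pow_add]; congr 1 <;> omega
    have e1 : y^(d+1) * y^k = y^(d+k+1) := by
      rw [← pow_add]; congr 1 <;> omega
    calc ((d:ℝ)+1) * y^d = ((d:ℝ)+1) * y^(d-k) * y^k := by rw [mul_assoc, e0]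
      _ ≤ (((d:ℝ)-(k:ℝ)) * y^(d+1) + ((k:ℝ)+1)) * y^k := this
      _ = ((d:ℝ)-(k:ℝ)) * (y^(d+1) * y^k) + ((k:ℝ)+1)*y^k := by ring
      _ = ((d:ℝ)-(k:ℝ)) * y^(d+k+1) + ((k:ℝ)+1)*y^k := by rw [e1]
  have e2 : y^d * y^(k+1) = y^(d+k+1) := by rw [← pow_add]; congr 1 <;> omega
  have e3 : y^k * y^(d+1) = y^(d+k+1) := by rw [← pow_add]; congr 1 <;> omega
  have hcoef : ((k:ℝ)+1)*(d:ℝ)*y^(d+k+1) - (k:ℝ)*((d:ℝ)+1)*y^(d+k+1)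
      = ((d:ℝ)-(k:ℝ))*y^(d+k+1) := by ring
  calc ((d:ℝ)+1) * y^d * ((k:ℝ)*y^(k+1)+1)
      = (k:ℝ)*((d:ℝ)+1)*(y^d*y^(k+1)) + ((d:ℝ)+1)*y^d := by ring
    _ = (k:ℝ)*((d:ℝ)+1)*y^(d+k+1) + ((d:ℝ)+1)*y^d := by rw [e2]
    _ ≤ ((k:ℝ)+1)*(d:ℝ)*y^(d+k+1) + ((k:ℝ)+1)*y^k := by linarith
    _ = ((k:ℝ)+1) * y^k * ((d:ℝ)*y^(d+1)+1) := by
        rw [show ((k:ℝ)+1) * y^k * ((d:ℝ)*y^(d+1)+1)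
            = ((k:ℝ)+1)*(d:ℝ)*(y^k*y^(d+1)) + ((k:ℝ)+1)*y^k by ring, e3]

lemma argPos (m : ℕ) {x : ℝ} (hx : (0:ℝ) ≤ x) : (0:ℝ) < (m:ℝ)*x^(m+1)+1 := by
  have : (0:ℝ) ≤ (m:ℝ)*x^(m+1) := mul_nonneg (Nat.cast_nonneg m) (pow_nonneg hx _)
  linarith

lemma hasDerivAtLogPart (m : ℕ) {x : ℝ} (hx : (0:ℝ) ≤ x) :
    HasDerivAt (fun t : ℝ => Real.log ((m:ℝ)*t^(m+1)+1) - Real.log ((m:ℝ)+1))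
      ((m:ℝ)*(((m:ℝ)+1)*x^m) / ((m:ℝ)*x^(m+1)+1)) x := by
  have h1 : HasDerivAt (fun t:ℝ => (m:ℝ)*t^(m+1)+1) ((m:ℝ)*(((m:ℝ)+1)*x^m)) x := by
    have := ((hasDerivAt_pow (m+1) x).const_mul (m:ℝ)).add_const 1
    simpa using this
  exact (h1.log (ne_of_gt (argPos m hx))).sub_const _

lemma claimC (k d : ℕ) (hk1 : 1 ≤ k) (hkd : k ≤ d) {Y : ℝ} (hY : 1 ≤ Y) :
    (((d:ℝ)*Y^(d+1)+1)/((d:ℝ)+1)) ^ ((1:ℝ)/(d:ℝ))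
      ≤ (((k:ℝ)*Y^(k+1)+1)/((k:ℝ)+1)) ^ ((1:ℝ)/(k:ℝ)) := by
  have hd1 : 1 ≤ d := le_trans hk1 hkd
  have hkR : (0:ℝ) < (k:ℝ) := by exact_mod_cast hk1
  have hdR : (0:ℝ) < (d:ℝ) := by exact_mod_cast hd1
  set F : ℝ → ℝ := fun x =>
    (1/(k:ℝ)) * (Real.log ((k:ℝ)*x^(k+1)+1) - Real.log ((k:ℝ)+1)) -
    (1/(d:ℝ)) * (Real.log ((d:ℝ)*x^(d+1)+1) - Real.log ((d:ℝ)+1)) with hF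
  have hder : ∀ x : ℝ, (0:ℝ) ≤ x → HasDerivAt F
      ((1/(k:ℝ)) * ((k:ℝ)*(((k:ℝ)+1)*x^k) / ((k:ℝ)*x^(k+1)+1)) -
       (1/(d:ℝ)) * ((d:ℝ)*(((d:ℝ)+1)*x^d) / ((d:ℝ)*x^(d+1)+1))) x := fun x hx =>
    ((hasDerivAtLogPart k hx).const_mul _).sub ((hasDerivAtLogPart d hx).const_mul _)
  have hmono : MonotoneOn F (Set.Ici (1:ℝ)) := by
    apply monotoneOn_of_deriv_nonneg (convex_Ici 1)
    · intro x hx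
      exact ((hder x (by exact le_trans zero_le_one hx)).continuousAt).continuousWithinAt
    · intro x hx
      rw [interior_Ici] at hx
      exact (hder x (by linarith [Set.mem_Ioi.mp hx])).differentiableAt.differentiableWithinAt
    · intro x hx
      rw [interior_Ici] at hx
      have hx1 : (1:ℝ) ≤ x := le_of_lt (Set.mem_Ioi.mp hx)
      have hx0 : (0:ℝ) ≤ x := le_trans zero_le_one hx1
      rw [(hder x hx0).deriv]
      have hA : (0:ℝ) < (k:ℝ)*x^(k+1)+1 := argPos k hx0
      have hB : (0:ℝ) < (d:ℝ)*x^(d+1)+1 := argPos d hx0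
      have e1 : (1/(k:ℝ)) * ((k:ℝ)*(((k:ℝ)+1)*x^k) / ((k:ℝ)*x^(k+1)+1))
          = ((k:ℝ)+1)*x^k / ((k:ℝ)*x^(k+1)+1) := by
        field_simp
      have e2 : (1/(d:ℝ)) * ((d:ℝ)*(((d:ℝ)+1)*x^d) / ((d:ℝ)*x^(d+1)+1))
          = ((d:ℝ)+1)*x^d / ((d:ℝ)*x^(d+1)+1) := by
        field_simp
      rw [e1, e2, sub_nonneg, div_le_div_iff₀ hB hA]
      exact crossIneq k d hkd hx1
  have hF1 : F 1 = 0 := by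
    simp [hF]
  have hFY : 0 ≤ F Y := by
    have := hmono (Set.mem_Ici.mpr (le_refl (1:ℝ))) (Set.mem_Ici.mpr hY) hY
    rw [hF1] at this
    exact this
  have hbpos : ∀ m : ℕ, (0:ℝ) < ((m:ℝ)*Y^(m+1)+1)/((m:ℝ)+1) := fun m =>
    div_pos (argPos m (by linarith)) (by positivity)
  rw [Real.rpow_def_of_pos (hbpos d), Real.rpow_def_of_pos (hbpos k)]
  apply Real.exp_le_exp.mpr
  have hlogd : Real.log (((d:ℝ)*Y^(d+1)+1)/((d:ℝ)+1))
      = Real.log ((d:ℝ)*Y^(d+1)+1) - Real.log ((d:ℝ)+1) :=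
    Real.log_div (ne_of_gt (argPos d (by linarith))) (by positivity)
  have hlogk : Real.log (((k:ℝ)*Y^(k+1)+1)/((k:ℝ)+1))
      = Real.log ((k:ℝ)*Y^(k+1)+1) - Real.log ((k:ℝ)+1) :=
    Real.log_div (ne_of_gt (argPos k (by linarith))) (by positivity)
  rw [hlogd, hlogk]
  have := hFY
  rw [hF] at this
  simp only [sub_nonneg] at this
  nlinarith [this]

lemma lemmaL {V : Type*} (s : Finset V) (k : V → ℕ) (a : V → ℝ) (lv : ℝ)
    (hk1 : ∀ u ∈ s, 1 ≤ k u) (hks : ∀ u ∈ s, k u ≤ s.card)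
    (ha : ∀ u ∈ s, 0 ≤ a u) (hlv : 0 ≤ lv) :
    ff s.card lv * ∏ u ∈ s, ff (k u) (a u)
      ≤ (∏ u ∈ s, (1 + ((k u):ℝ) * a u) ^ ((1:ℝ)/((k u):ℝ))) + lv := by
  rcases s.eq_empty_or_nonempty with rfl | hs
  · simp only [Finset.prod_empty, Finset.card_empty, mul_one]
    rw [ff]
    norm_num
  have hd1 : 1 ≤ s.card := Finset.card_pos.mpr hs
  set d : ℕ := s.card with hd
  have hdR : (0:ℝ) < (d:ℝ) := by exact_mod_cast hd1
  set y : V → ℝ := fun u => ff (k u) (a u) with hy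
  have hy1 : ∀ u ∈ s, (1:ℝ) ≤ y u := fun u hu => ff_one_le (k u) (ha u hu)
  set p : ℝ := ∏ u ∈ s, y u with hp
  have hp1 : (1:ℝ) ≤ p := by
    rw [hp]
    have := Finset.prod_le_prod (s := s) (f := fun _ => (1:ℝ)) (g := y)
      (fun u hu => zero_le_one) (fun u hu => hy1 u hu)
    simpa using this
  have hppos : (0:ℝ) < p := lt_of_lt_of_le one_pos hp1
  -- Step 1: pointwise claim C
  have step1 : ∀ u ∈ s, (((d:ℝ) * (y u)^(d+1) + 1)/((d:ℝ)+1)) ^ ((1:ℝ)/(d:ℝ))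
      ≤ (1 + ((k u):ℝ) * a u) ^ ((1:ℝ)/((k u):ℝ)) := by
    intro u hu
    have hyk : (y u)^(k u+1) = 1 + (((k u):ℝ)+1)*(a u) := ff_pow (k u) (ha u hu)
    have hC := claimC (k u) d (hk1 u hu) (hks u hu) (hy1 u hu)
    have hkne : ((k u:ℝ)+1) ≠ 0 := by positivity
    have hre : (((k u):ℝ)*(y u)^(k u+1)+1)/(((k u):ℝ)+1) = 1 + ((k u):ℝ)*a u := by
      rw [hyk]
      field_simp
      ring
    rw [hre] at hC
    exact hC
  have hz1 : ∀ u ∈ s, (1:ℝ) ≤ (y u)^(d+1) := fun u hu => one_le_pow₀ (hy1 u hu)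
  have hTpos : ∀ u ∈ s, (0:ℝ) < (d:ℝ) * (y u)^(d+1) + 1 := fun u hu => by nlinarith [hz1 u hu]
  -- Step 2: product of step 1
  have step2 : ∏ u ∈ s, (((d:ℝ) * (y u)^(d+1) + 1)/((d:ℝ)+1)) ^ ((1:ℝ)/(d:ℝ))
      ≤ ∏ u ∈ s, (1 + ((k u):ℝ) * a u) ^ ((1:ℝ)/((k u):ℝ)) :=
    Finset.prod_le_prod (fun u hu => Real.rpow_nonneg
      (div_nonneg (hTpos u hu).le (by positivity)) _) step1
  -- Step 3: rewrite LHS of step2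
  have step3 : ∏ u ∈ s, (((d:ℝ) * (y u)^(d+1) + 1)/((d:ℝ)+1)) ^ ((1:ℝ)/(d:ℝ))
      = (∏ u ∈ s, ((d:ℝ) * (y u)^(d+1) + 1) ^ ((1:ℝ)/(d:ℝ))) / ((d:ℝ)+1) := by
    have hc : ∀ u ∈ s, (((d:ℝ) * (y u)^(d+1) + 1)/((d:ℝ)+1)) ^ ((1:ℝ)/(d:ℝ))
        = ((d:ℝ) * (y u)^(d+1) + 1) ^ ((1:ℝ)/(d:ℝ)) / (((d:ℝ)+1) ^ ((1:ℝ)/(d:ℝ))) :=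
      fun u hu => Real.div_rpow (hTpos u hu).le (by positivity) _
    rw [Finset.prod_congr rfl hc, Finset.prod_div_distrib]
    congr 1
    rw [Finset.prod_const, ← hd, ← Real.rpow_natCast (((d:ℝ)+1) ^ ((1:ℝ)/(d:ℝ))) d,
      ← Real.rpow_mul (by positivity)]
    rw [show (1:ℝ)/(d:ℝ) * ((d:ℕ):ℝ) = 1 by field_simp]
    exact Real.rpow_one _
  -- Step 4: Minkowski
  have step4 := minkowskiGM s hs (fun u => (y u)^(d+1)) hz1
  rw [← hd] at step4
  have hprodz : ∏ u ∈ s, (y u)^(d+1) = p^(d+1) := by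
    rw [hp, ← Finset.prod_pow]
  rw [hprodz] at step4
  -- Step 5: final AM-GM
  set t : ℝ := ff d lv with ht
  have ht1 : (1:ℝ) ≤ t := ff_one_le d hlv
  have htpos : (0:ℝ) < t := lt_of_lt_of_le one_pos ht1
  have htpow : t^(d+1) = 1 + ((d:ℝ)+1)*lv := ff_pow d hlv
  set P1 : ℝ := (p^(d+1)) ^ ((1:ℝ)/(d:ℝ)) with hP1
  have hP1pos : (0:ℝ) < P1 := Real.rpow_pos_of_pos (pow_pos hppos _) _
  have hgm : P1 ^ ((d:ℝ)/((d:ℝ)+1)) * (t^(d+1)) ^ ((1:ℝ)/((d:ℝ)+1))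
      ≤ (d:ℝ)/((d:ℝ)+1) * P1 + 1/((d:ℝ)+1) * t^(d+1) :=
    Real.geom_mean_le_arith_mean2_weighted
      (show (0:ℝ) ≤ (d:ℝ)/((d:ℝ)+1) by positivity)
      (show (0:ℝ) ≤ 1/((d:ℝ)+1) by positivity)
      hP1pos.le (pow_pos htpos (d+1)).le
      (by field_simp)
  have hdne : (d:ℝ) ≠ 0 := hdR.ne'
  have hd1ne : ((d:ℝ)+1) ≠ 0 := by positivity
  have hgm1 : P1 ^ ((d:ℝ)/((d:ℝ)+1)) = p := by
    rw [hP1, ← Real.rpow_natCast p (d+1), ← Real.rpow_mul hppos.le, ← Real.rpow_mul hppos.le]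
    rw [show ((d+1:ℕ):ℝ) * ((1:ℝ)/(d:ℝ)) * ((d:ℝ)/((d:ℝ)+1)) = 1 by push_cast; field_simp]
    exact Real.rpow_one p
  have hgm2 : ((t^(d+1) : ℝ)) ^ ((1:ℝ)/((d:ℝ)+1)) = t := by
    rw [← Real.rpow_natCast t (d+1), ← Real.rpow_mul htpos.le]
    rw [show ((d+1:ℕ):ℝ) * ((1:ℝ)/((d:ℝ)+1)) = 1 by push_cast; field_simp]
    exact Real.rpow_one t
  rw [hgm1, hgm2] at hgm
  have step5 : t * p ≤ ((d:ℝ)*P1 + 1)/((d:ℝ)+1) + lv := by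
    have hr : (d:ℝ)/((d:ℝ)+1) * P1 + 1/((d:ℝ)+1) * t^(d+1)
        = ((d:ℝ)*P1 + 1)/((d:ℝ)+1) + lv := by
      rw [htpow]
      field_simp
      ring
    calc t * p = p * t := by ring
      _ ≤ (d:ℝ)/((d:ℝ)+1) * P1 + 1/((d:ℝ)+1) * t^(d+1) := hgm
      _ = ((d:ℝ)*P1 + 1)/((d:ℝ)+1) + lv := hr
  have step4' : ((d:ℝ)*P1 + 1)/((d:ℝ)+1)
      ≤ (∏ u ∈ s, ((d:ℝ) * (y u)^(d+1) + 1) ^ ((1:ℝ)/(d:ℝ))) / ((d:ℝ)+1) := by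
    gcongr
  calc t * p
      ≤ ((d:ℝ)*P1 + 1)/((d:ℝ)+1) + lv := step5
    _ ≤ (∏ u ∈ s, ((d:ℝ) * (y u)^(d+1) + 1) ^ ((1:ℝ)/(d:ℝ))) / ((d:ℝ)+1) + lv := by linarith
    _ = (∏ u ∈ s, (((d:ℝ) * (y u)^(d+1) + 1)/((d:ℝ)+1)) ^ ((1:ℝ)/(d:ℝ))) + lv := by rw [step3]
    _ ≤ (∏ u ∈ s, (1 + ((k u):ℝ) * a u) ^ ((1:ℝ)/((k u):ℝ))) + lv := by linarith

variable {n : ℕ} (G : SimpleGraph (Fin n)) [DecidableRel G.Adj] (lam : Fin n → ℝ)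

noncomputable def Zg (A : Finset (Fin n)) : ℝ :=
  ∑ I ∈ A.powerset.filter (fun I => ∀ u ∈ I, ∀ v ∈ I, ¬ G.Adj u v), ∏ v ∈ I, lam v

def degA (A : Finset (Fin n)) (v : Fin n) : ℕ := (G.neighborFinset v ∩ A).card

lemma Zg_empty : Zg G lam ∅ = 1 := by
  rw [Zg]
  rw [show (∅ : Finset (Fin n)).powerset.filter (fun I => ∀ u ∈ I, ∀ v ∈ I, ¬ G.Adj u v)
      = {∅} from by ext I; simp [Finset.subset_empty]; intro h; subst h; simp]
  simp

lemma Zg_rec (A : Finset (Fin n)) {v : Fin n} (hv : v ∈ A) :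
    Zg G lam A = Zg G lam (A.erase v)
      + lam v * Zg G lam ((A.erase v) \ G.neighborFinset v) := by
  classical
  rw [Zg, ← Finset.sum_filter_add_sum_filter_not
    (A.powerset.filter (fun I => ∀ u ∈ I, ∀ v ∈ I, ¬ G.Adj u v)) (fun I => v ∈ I)]
  have hpartB : (A.powerset.filter (fun I => ∀ u ∈ I, ∀ w ∈ I, ¬ G.Adj u w)).filter
      (fun I => v ∉ I) = (A.erase v).powerset.filter (fun I => ∀ u ∈ I, ∀ w ∈ I, ¬ G.Adj u w) := by
    ext I
    simp only [Finset.mem_filter, Finset.mem_powerset, Finset.subset_erase]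
    tauto
  have hpartA : ∑ I ∈ (A.powerset.filter (fun I => ∀ u ∈ I, ∀ w ∈ I, ¬ G.Adj u w)).filter
      (fun I => v ∈ I), ∏ u ∈ I, lam u
      = lam v * Zg G lam ((A.erase v) \ G.neighborFinset v) := by
    rw [Zg, Finset.mul_sum]
    refine Finset.sum_bij' (fun I _ => I.erase v) (fun J _ => insert v J) ?_ ?_ ?_ ?_ ?_
    · intro I hI
      simp only [Finset.mem_filter, Finset.mem_powerset] at hI
      obtain ⟨⟨hIA, hind⟩, hvI⟩ := hI
      simp only [Finset.mem_filter, Finset.mem_powerset]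
      refine ⟨?_, fun u hu w hw => hind u (Finset.mem_of_mem_erase hu) w (Finset.mem_of_mem_erase hw)⟩
      intro u hu
      rw [Finset.mem_sdiff, Finset.mem_erase]
      obtain ⟨hune, huI⟩ := Finset.mem_erase.mp hu
      refine ⟨⟨hune, hIA huI⟩, fun hadj => ?_⟩
      exact hind v hvI u huI (G.mem_neighborFinset v u |>.mp hadj)
    · intro J hJ
      simp only [Finset.mem_filter, Finset.mem_powerset] at hJ
      obtain ⟨hJC, hind⟩ := hJ
      have hvJ : v ∉ J := fun h => ((Finset.mem_sdiff.mp (hJC h)).1 |> Finset.mem_erase.mp).1 rfl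
      simp only [Finset.mem_filter, Finset.mem_powerset]
      refine ⟨⟨?_, ?_⟩, Finset.mem_insert_self v J⟩
      · intro u hu
        rcases Finset.mem_insert.mp hu with rfl | huJ
        · exact hv
        · exact Finset.mem_of_mem_erase (Finset.mem_sdiff.mp (hJC huJ)).1
      · intro u hu w hw
        rcases Finset.mem_insert.mp hu with rfl | huJ <;> rcases Finset.mem_insert.mp hw with rfl | hwJ
        · exact G.loopless.irrefl _
        · intro hadj
          exact (Finset.mem_sdiff.mp (hJC hwJ)).2 ((G.mem_neighborFinset _ _).mpr hadj)
        · intro hadj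
          exact (Finset.mem_sdiff.mp (hJC huJ)).2 ((G.mem_neighborFinset _ _).mpr hadj.symm)
        · exact hind u huJ w hwJ
    · intro I hI
      simp only [Finset.mem_filter] at hI
      exact Finset.insert_erase hI.2
    · intro J hJ
      simp only [Finset.mem_filter, Finset.mem_powerset] at hJ
      have hvJ : v ∉ J := fun h => ((Finset.mem_sdiff.mp (hJ.1 h)).1 |> Finset.mem_erase.mp).1 rfl
      exact Finset.erase_insert hvJ
    · intro I hI
      simp only [Finset.mem_filter] at hI
      exact (Finset.mul_prod_erase I lam hI.2).symm
  rw [hpartA, hpartB, ← Zg]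
  ring

lemma ff_pred (k : ℕ) (hk : 1 ≤ k) (x : ℝ) :
    ff (k-1) x = (1 + (k:ℝ)*x) ^ ((1:ℝ)/(k:ℝ)) := by
  have h : ((k-1:ℕ):ℝ) + 1 = (k:ℝ) := by
    rw [Nat.cast_sub hk]
    push_cast
    ring
  rw [ff, h]

lemma degA_erase_adj {A : Finset (Fin n)} {v u : Fin n} (hvA : v ∈ A) (hadj : G.Adj v u) :
    degA G (A.erase v) u = degA G A u - 1 := by
  rw [degA, degA]
  have hmem : v ∈ G.neighborFinset u ∩ A :=
    Finset.mem_inter.mpr ⟨(G.mem_neighborFinset u v).mpr hadj.symm, hvA⟩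
  rw [show G.neighborFinset u ∩ A.erase v = (G.neighborFinset u ∩ A).erase v from by
    ext w
    simp only [Finset.mem_inter, Finset.mem_erase]
    tauto]
  exact Finset.card_erase_of_mem hmem

lemma degA_erase_nonadj {A : Finset (Fin n)} {v u : Fin n} (hnadj : ¬ G.Adj v u) :
    degA G (A.erase v) u = degA G A u := by
  rw [degA, degA]
  congr 1
  ext w
  simp only [Finset.mem_inter, Finset.mem_erase]
  constructor
  · rintro ⟨h1, _, h3⟩
    exact ⟨h1, h3⟩
  · rintro ⟨h1, h3⟩
    refine ⟨h1, ?_, h3⟩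
    rintro rfl
    exact hnadj ((G.mem_neighborFinset u _).mp h1).symm

lemma mainThm (hlam : ∀ i, 0 ≤ lam i) (A : Finset (Fin n)) :
    ∏ v ∈ A, ff (degA G A v) (lam v) ≤ Zg G lam A := by
  induction A using Finset.strongInduction with
  | _ A ih =>
  rcases A.eq_empty_or_nonempty with rfl | hA
  · rw [Finset.prod_empty, Zg_empty]
  obtain ⟨v, hv, hmax⟩ := Finset.exists_max_image A (degA G A) hA
  set B := A.erase v with hB
  set NB := G.neighborFinset v ∩ A with hNB
  set Cv := B \ G.neighborFinset v with hCv
  have hNBsubA : NB ⊆ A := by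
    intro u hu
    exact (Finset.mem_inter.mp hu).2
  have hNBsubB : NB ⊆ B := by
    intro u hu
    obtain ⟨h1, h2⟩ := Finset.mem_inter.mp hu
    rw [hB, Finset.mem_erase]
    exact ⟨(G.ne_of_adj ((G.mem_neighborFinset v u).mp h1)).symm, h2⟩
  have hBsplit : B \ NB = Cv := by
    ext u
    simp only [hCv, hNB, hB, Finset.mem_sdiff, Finset.mem_erase, Finset.mem_inter]
    tauto
  have hcard : NB.card = degA G A v := rfl
  have hBsub : B ⊂ A := Finset.erase_ssubset hv
  have hCsubB : Cv ⊆ B := Finset.sdiff_subset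
  have hCsub : Cv ⊂ A := lt_of_le_of_lt hCsubB hBsub
  have hCsubA : Cv ⊆ A := le_of_lt hCsub
  have ihB := ih B hBsub
  have ihC := ih Cv hCsub
  have hffnn : ∀ (m : ℕ) (u : Fin n), (0:ℝ) ≤ ff m (lam u) :=
    fun m u => le_trans zero_le_one (ff_one_le m (hlam u))
  have hCdeg : ∀ u ∈ Cv, degA G Cv u ≤ degA G A u := fun u _ =>
    Finset.card_le_card (Finset.inter_subset_inter (le_refl _) hCsubA)
  have chainC : ∏ u ∈ Cv, ff (degA G A u) (lam u) ≤ Zg G lam Cv :=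
    le_trans (Finset.prod_le_prod (fun u _ => hffnn _ u)
      (fun u hu => ff_anti _ _ (hCdeg u hu) (hlam u))) ihC
  have hadjNB : ∀ u ∈ NB, G.Adj v u := fun u hu =>
    (G.mem_neighborFinset v u).mp (Finset.mem_inter.mp hu).1
  have prodB : ∏ u ∈ B, ff (degA G B u) (lam u)
      = (∏ u ∈ Cv, ff (degA G A u) (lam u)) * ∏ u ∈ NB, ff (degA G A u - 1) (lam u) := by
    rw [← Finset.prod_sdiff hNBsubB, hBsplit]
    congr 1
    · refine Finset.prod_congr rfl (fun u hu => ?_)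
      have hnadj : ¬ G.Adj v u := fun h =>
        (Finset.mem_sdiff.mp hu).2 ((G.mem_neighborFinset v u).mpr h)
      rw [hB, degA_erase_nonadj G hnadj]
    · refine Finset.prod_congr rfl (fun u hu => ?_)
      rw [hB, degA_erase_adj G hv (hadjNB u hu)]
  have hZB : (∏ u ∈ Cv, ff (degA G A u) (lam u)) * ∏ u ∈ NB, ff (degA G A u - 1) (lam u)
      ≤ Zg G lam B := prodB ▸ ihB
  have hrec : Zg G lam A = Zg G lam B + lam v * Zg G lam Cv := Zg_rec G lam A hv
  have hk1 : ∀ u ∈ NB, 1 ≤ degA G A u := fun u hu =>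
    Finset.card_pos.mpr ⟨v, Finset.mem_inter.mpr
      ⟨(G.mem_neighborFinset u v).mpr (hadjNB u hu).symm, hv⟩⟩
  have hks : ∀ u ∈ NB, degA G A u ≤ NB.card := fun u hu => hcard ▸ hmax u (hNBsubA hu)
  have hLL := lemmaL NB (degA G A) lam (lam v) hk1 hks (fun u _ => hlam u) (hlam v)
  have hbr : ∏ u ∈ NB, (1 + ((degA G A u):ℝ) * lam u) ^ ((1:ℝ)/((degA G A u):ℝ))
      = ∏ u ∈ NB, ff (degA G A u - 1) (lam u) :=
    Finset.prod_congr rfl (fun u hu => (ff_pred _ (hk1 u hu) _).symm)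
  rw [hbr] at hLL
  have prodA : ∏ u ∈ A, ff (degA G A u) (lam u)
      = ff (degA G A v) (lam v) *
        ((∏ u ∈ Cv, ff (degA G A u) (lam u)) * ∏ u ∈ NB, ff (degA G A u) (lam u)) := by
    rw [← Finset.mul_prod_erase A _ hv, ← hB, ← Finset.prod_sdiff hNBsubB, hBsplit]
  set P : ℝ := ∏ u ∈ Cv, ff (degA G A u) (lam u) with hP
  have hPnn : (0:ℝ) ≤ P := Finset.prod_nonneg (fun u _ => hffnn _ u)
  calc ∏ u ∈ A, ff (degA G A u) (lam u)
      = P * (ff NB.card (lam v) * ∏ u ∈ NB, ff (degA G A u) (lam u)) := by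
        rw [prodA, hcard]; ring
    _ ≤ P * ((∏ u ∈ NB, ff (degA G A u - 1) (lam u)) + lam v) :=
        mul_le_mul_of_nonneg_left hLL hPnn
    _ = P * (∏ u ∈ NB, ff (degA G A u - 1) (lam u)) + lam v * P := by ring
    _ ≤ Zg G lam B + lam v * Zg G lam Cv :=
        add_le_add hZB (mul_le_mul_of_nonneg_left chainC (hlam v))
    _ = Zg G lam A := hrec.symm


theorem stmt_0 (n : ℕ) (G : SimpleGraph (Fin n)) [DecidableRel G.Adj]
    (lam : Fin n → ℝ) (hlam : ∀ i, 0 ≤ lam i) :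
    (∑ I ∈ Finset.univ.filter
        (fun I : Finset (Fin n) => ∀ u ∈ I, ∀ v ∈ I, ¬ G.Adj u v),
      ∏ v ∈ I, lam v)
    ≥ ∏ i, (1 + ((G.degree i : ℝ) + 1) * lam i) ^ ((1 : ℝ) / ((G.degree i : ℝ) + 1)) := by
  have h := mainThm G lam hlam Finset.univ
  rw [Zg, Finset.powerset_univ] at h
  have hdeg : ∀ i : Fin n, degA G Finset.univ i = G.degree i := fun i => by
    rw [degA, Finset.inter_univ]
    exact G.card_neighborFinset_eq_degree i
  rw [ge_iff_le]
  calc ∏ i, (1 + ((G.degree i : ℝ) + 1) * lam i) ^ ((1 : ℝ) / ((G.degree i : ℝ) + 1))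
      = ∏ i, ff (degA G Finset.univ i) (lam i) := by
        refine Finset.prod_congr rfl (fun i _ => ?_)
        rw [ff, hdeg i]
    _ ≤ _ := h
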